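/- If Ω ⊂ ℙ(ℝ^d) is a properly convex domain, 𝒟 ⊆ Ω is a non-empty closed convex set, and r ≥ 0, then the open r-neighborhood 𝒩_r(𝒟) := {x ∈ Ω : H_Ω(x, 𝒟) < r} (where H_Ω(x,𝒟) = inf_{y∈𝒟} H_Ω(x,y)) is a convex subset of Ω. -/

import Mathlib

open scoped LinearAlgebra.Projectivization Pointwise
open Projectivization Matrix

namespace CCProj

abbrev PSp (d : ℕ) := ℙ ℝ (Fin d → ℝ)

noncomputable instance (d : ℕ) : TopologicalSpace (PSp d) :=
  inferInstanceAs (TopologicalSpace (Quotient (projectivizationSetoid ℝ (Fin d → ℝ))))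

variable {d : ℕ}

noncomputable def glEquivHom (d : ℕ) :
    GL (Fin d) ℝ →* ((Fin d → ℝ) ≃ₗ[ℝ] (Fin d → ℝ)) :=
  (Matrix.GeneralLinearGroup.toLin.trans
    (LinearMap.GeneralLinearGroup.generalLinearEquiv ℝ (Fin d → ℝ))).toMonoidHom

noncomputable def projPerm (e : (Fin d → ℝ) ≃ₗ[ℝ] (Fin d → ℝ)) : Equiv.Perm (PSp d) where
  toFun := Projectivization.map e.toLinearMap e.injective
  invFun := Projectivization.map e.symm.toLinearMap e.symm.injective
  left_inv x := by
    induction x using Projectivization.ind with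
    | h v hv => simp [Projectivization.map_mk]
  right_inv x := by
    induction x using Projectivization.ind with
    | h v hv => simp [Projectivization.map_mk]

noncomputable def glToPerm (d : ℕ) : GL (Fin d) ℝ →* Equiv.Perm (PSp d) where
  toFun g := projPerm (glEquivHom d g)
  map_one' := by
    ext x
    induction x using Projectivization.ind with
    | h v hv => simp [projPerm, Projectivization.map_mk]
  map_mul' g h := by
    ext x
    induction x using Projectivization.ind with
    | h v hv => simp [projPerm, Projectivization.map_mk]

abbrev PGL (d : ℕ) := GL (Fin d) ℝ ⧸ (glToPerm d).ker

noncomputable def pglPerm (d : ℕ) : PGL d →* Equiv.Perm (PSp d) :=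
  QuotientGroup.lift _ (glToPerm d) (fun _ hg => hg)

noncomputable instance : MulAction (PGL d) (PSp d) :=
  MulAction.compHom _ (pglPerm d)

/-! ### Convexity in projective space -/

/-- The affine chart associated to a linear functional `f`: a projective point `x` with
`f(x.rep) ≠ 0` is sent to the unique representative `v` of `x` with `f v = 1`. -/
noncomputable def chartMap (f : (Fin d → ℝ) →ₗ[ℝ] ℝ) (x : PSp d) : Fin d → ℝ :=
  (f x.rep)⁻¹ • x.rep

/-- A set `C ⊆ ℙ(ℝ^d)` is convex if it lies in some affine chart and is convex there. -/
def IsConvexSet (C : Set (PSp d)) : Prop :=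
  ∃ f : (Fin d → ℝ) →ₗ[ℝ] ℝ, (∀ x ∈ C, f x.rep ≠ 0) ∧ Convex ℝ (chartMap f '' C)

/-- A set `C ⊆ ℙ(ℝ^d)` is properly convex if it lies in some affine chart and is
convex and bounded there. -/
def IsProperlyConvexSet (C : Set (PSp d)) : Prop :=
  ∃ f : (Fin d → ℝ) →ₗ[ℝ] ℝ, (∀ x ∈ C, f x.rep ≠ 0) ∧ Convex ℝ (chartMap f '' C) ∧
    Bornology.IsBounded (chartMap f '' C)

/-- A properly convex domain: a non-empty open properly convex subset of `ℙ(ℝ^d)`. -/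
def IsProperlyConvexDomain (Ω : Set (PSp d)) : Prop :=
  IsOpen Ω ∧ Ω.Nonempty ∧ IsProperlyConvexSet Ω

/-- The projectivization of a linear subspace `W ⊆ ℝ^d`, as a subset of `ℙ(ℝ^d)`. -/
def Pb (W : Submodule ℝ (Fin d → ℝ)) : Set (PSp d) := {x | x.rep ∈ W}

/-- The linear span of (the lines representing) a subset of `ℙ(ℝ^d)`. -/
def projSpan (C : Set (PSp d)) : Submodule ℝ (Fin d → ℝ) :=
  Submodule.span ℝ {v | ∃ x ∈ C, v = Projectivization.rep x}

/-- `C` is open in its span, i.e. equal to its relative interior. -/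
def OpenInSpan (C : Set (PSp d)) : Prop :=
  ∃ U : Set (PSp d), IsOpen U ∧ C = U ∩ Pb (projSpan C)

/-! ### The Hilbert metric -/

/-- The set of "cross-ratio" values used to define the Hilbert distance on a properly
convex set `C` which is open in its span: for linear functionals `f, g` which do not
vanish on (the cone over) `C`, one takes `f(ξ)g(η)/(f(η)g(ξ))` where `ξ, η` are
representatives of `x, y`.  (This quantity is independent of the choice of
representatives.)  For such a set `C`, the supremum of this set is exactly the
cross-ratio `[a,x,y,b]` of the classical definition of the Hilbert distance, where
`a, x, y, b` are aligned in this order on the projective line through `x` and `y`,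
with `a, b ∈ ∂C`. -/
def crossSet (C : Set (PSp d)) (x y : PSp d) : Set ℝ :=
  {r | ∃ f g : (Fin d → ℝ) →ₗ[ℝ] ℝ, (∀ z ∈ C, f z.rep ≠ 0) ∧ (∀ z ∈ C, g z.rep ≠ 0) ∧
      r = (f x.rep * g y.rep) / (f y.rep * g x.rep)}

/-- The Hilbert distance on a properly convex set `C ⊆ ℙ(ℝ^d)` which is open in its
span: `H_C(x,y) = (1/2) log [a,x,y,b]`. -/
noncomputable def hilbertDist (C : Set (PSp d)) (x y : PSp d) : ℝ :=
  (1 / 2) * Real.log (sSup (crossSet C x y))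

/-- The distance from a point to a set, for the Hilbert metric on `C`. -/
noncomputable def hilbertDistToSet (C : Set (PSp d)) (x : PSp d) (D : Set (PSp d)) : ℝ :=
  sInf {s | ∃ y ∈ D, s = hilbertDist C x y}

/-- The Hausdorff distance between two subsets of `C`, for the Hilbert metric on `C`. -/
noncomputable def hilbertHausDist (C : Set (PSp d)) (A B : Set (PSp d)) : ℝ :=
  max (sSup {r | ∃ a ∈ A, r = hilbertDistToSet C a B})
      (sSup {r | ∃ b ∈ B, r = hilbertDistToSet C b A})

/-- The minimal translation length `τ_C(g) = inf_{x ∈ C} H_C(x, gx)`. -/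
noncomputable def transLength (C : Set (PSp d)) (g : PGL d) : ℝ :=
  sInf ((fun x => hilbertDist C x (g • x)) '' C)

/-- The minimal translation set `Min(g) = {x ∈ Ω : H_Ω(x,gx) = τ_Ω(g)}`. -/
noncomputable def minSet (Ω : Set (PSp d)) (g : PGL d) : Set (PSp d) :=
  {x ∈ Ω | hilbertDist Ω x (g • x) = transLength Ω g}

/-! ### Automorphisms, cocompact actions -/

/-- The automorphism group `Aut(Ω) = {g ∈ PGL(d,ℝ) : gΩ = Ω}`. -/
noncomputable def aut (Ω : Set (PSp d)) : Subgroup (PGL d) := MulAction.stabilizer (PGL d) Ω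

/-- A collection `G` of elements of `PGL(d,ℝ)` acts co-compactly on `X ⊆ ℙ(ℝ^d)` if
there is a compact `K ⊆ X` with `⋃_{g ∈ G} gK = X`. -/
def ActsCocompactlyOn (G : Set (PGL d)) (X : Set (PSp d)) : Prop :=
  ∃ K : Set (PSp d), K ⊆ X ∧ IsCompact K ∧ (⋃ g ∈ G, g • K) = X

/-- A naive convex co-compact triple `(Ω, 𝒞, Λ)`. -/
structure IsNCCTriple (Ω 𝒞 : Set (PSp d)) (Λ : Subgroup (PGL d)) : Prop where
  dom : IsProperlyConvexDomain Ω
  lambda_le : Λ ≤ aut Ω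
  lambda_inf : (Λ : Set (PGL d)).Infinite
  lambda_disc : DiscreteTopology Λ
  C_nonempty : 𝒞.Nonempty
  C_sub : 𝒞 ⊆ Ω
  C_convex : IsConvexSet 𝒞
  C_closed : closure 𝒞 ∩ Ω ⊆ 𝒞   -- `𝒞` is closed in `Ω`
  C_inv : ∀ γ ∈ Λ, γ • 𝒞 = 𝒞
  C_cocompact : ActsCocompactlyOn (Λ : Set (PGL d)) 𝒞

/-! ### Segments, convex hulls and faces -/

/-- The smallest convex subset of `cl(C)` containing `X` (the convex hull of `X`
relative to `C`). -/
def convHull (C : Set (PSp d)) (X : Set (PSp d)) : Set (PSp d) :=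
  ⋂₀ {D | IsConvexSet D ∧ D ⊆ closure C ∧ X ⊆ D}

/-- The closed segment `[x,y]` joining two points of `cl(C)` inside `cl(C)`. -/
def closedSeg (C : Set (PSp d)) (x y : PSp d) : Set (PSp d) := convHull C {x, y}

/-- The open segment `(x,y) = [x,y] \ {x,y}`. -/
def openSeg (C : Set (PSp d)) (x y : PSp d) : Set (PSp d) := closedSeg C x y \ {x, y}

/-- The open segment with endpoints `[u]` and `[v]` (for `u, v` linearly independent):
the projective points `[a•u + b•v]` with `a, b > 0`. -/
def openSegV (u v : Fin d → ℝ) : Set (PSp d) :=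
  {z | ∃ a b : ℝ, 0 < a ∧ 0 < b ∧ ∃ h : a • u + b • v ≠ 0, z = Projectivization.mk ℝ (a • u + b • v) h}

/-- The projective line through `[u]` and `[v]`. -/
def projLine (u v : Fin d → ℝ) : Set (PSp d) :=
  {z | ∃ a b : ℝ, ∃ h : a • u + b • v ≠ 0, z = Projectivization.mk ℝ (a • u + b • v) h}

/-- The open face `F_Ω(x)` of a point `x ∈ cl(Ω)`. -/
def face (Ω : Set (PSp d)) (x : PSp d) : Set (PSp d) :=
  insert x {y ∈ closure Ω | ∃ u v : Fin d → ℝ,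
    openSegV u v ⊆ closure Ω ∧ x ∈ openSegV u v ∧ y ∈ openSegV u v}

/-- `A` is properly embedded in `B` if `A ⊆ B` and the inclusion is a proper map. -/
def ProperlyEmbedded (A B : Set (PSp d)) : Prop :=
  ∃ h : A ⊆ B, IsProperMap (Set.inclusion h)

/-! ### Simplices -/

/-- The standard open `(k-1)`-dimensional simplex
`{[x₁ : ⋯ : x_k : 0 : ⋯ : 0] : x₁ > 0, …, x_k > 0} ⊆ ℙ(ℝ^d)`. -/
def stdSimplex (d k : ℕ) : Set (PSp d) :=
  {x | ∃ (v : Fin d → ℝ) (h : v ≠ 0), x = Projectivization.mk ℝ v h ∧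
    ∀ i : Fin d, (((i : ℕ) < k → 0 < v i) ∧ (k ≤ (i : ℕ) → v i = 0))}

/-- The `i`-th standard basis point `[e_i] ∈ ℙ(ℝ^d)`. -/
noncomputable def basisPt (d : ℕ) (i : Fin d) : PSp d :=
  Projectivization.mk ℝ (Pi.single i 1) (by
    intro h
    have := congrFun h i
    simp at this)

/-- The absolute values of the complex eigenvalues of a real matrix. -/
noncomputable def eigAbs (M : Matrix (Fin d) (Fin d) ℝ) : Set ℝ :=
  (fun z : ℂ => ‖z‖) '' spectrum ℂ (M.map Complex.ofReal)

/-- The operator norm on `End(ℝ^d)` associated to the standard Euclidean norm. -/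
noncomputable def eucOpNorm (M : Matrix (Fin d) (Fin d) ℝ) : ℝ :=
  ‖Matrix.toEuclideanCLM (𝕜 := ℝ) M‖

/-- The image of a subset of `ℙ(ℝ^d)` under (the projectivization of) an endomorphism
`T` of `ℝ^d`. -/
def projImage (T : Matrix (Fin d) (Fin d) ℝ) (A : Set (PSp d)) : Set (PSp d) :=
  {y | ∃ (v : Fin d → ℝ) (hv : v ≠ 0), Projectivization.mk ℝ v hv ∈ A ∧
    ∃ hTv : T *ᵥ v ≠ 0, y = Projectivization.mk ℝ (T *ᵥ v) hTv}


section Prop43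

variable {d : ℕ}

/-- Positivity of a functional on the chart representatives of points of `Ω`. -/
def PosOn (Ω : Set (PSp d)) (f0 f : (Fin d → ℝ) →ₗ[ℝ] ℝ) : Prop :=
  ∀ z ∈ Ω, 0 < f (chartMap f0 z)

lemma chart_f0_eq_one {f0 : (Fin d → ℝ) →ₗ[ℝ] ℝ} {z : PSp d} (h : f0 z.rep ≠ 0) :
    f0 (chartMap f0 z) = 1 := by
  simp [chartMap, _root_.map_smul, smul_eq_mul, inv_mul_cancel₀ h]

lemma chart_ne_zero {f0 : (Fin d → ℝ) →ₗ[ℝ] ℝ} {z : PSp d} (h : f0 z.rep ≠ 0) :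
    chartMap f0 z ≠ 0 := by
  intro h0
  have h1 := chart_f0_eq_one h
  rw [h0, map_zero] at h1
  norm_num at h1

lemma eval_rep_eq {f0 : (Fin d → ℝ) →ₗ[ℝ] ℝ} {z : PSp d} (h : f0 z.rep ≠ 0)
    (f : (Fin d → ℝ) →ₗ[ℝ] ℝ) :
    f z.rep = f0 z.rep * f (chartMap f0 z) := by
  have h2 : (f0 z.rep) • chartMap f0 z = z.rep := smul_inv_smul₀ h _
  conv_lhs => rw [← h2]
  rw [_root_.map_smul, smul_eq_mul]

lemma mk_chart_eq {f0 : (Fin d → ℝ) →ₗ[ℝ] ℝ} {z : PSp d} (h : f0 z.rep ≠ 0) :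
    Projectivization.mk ℝ (chartMap f0 z) (chart_ne_zero h) = z := by
  conv_rhs => rw [← Projectivization.mk_rep z]
  rw [Projectivization.mk_eq_mk_iff]
  exact ⟨Units.mk0 _ (inv_ne_zero h), by simp [Units.smul_def, chartMap]⟩

lemma chart_mk_eq {f0 : (Fin d → ℝ) →ₗ[ℝ] ℝ} {v : Fin d → ℝ} (hv : v ≠ 0) (h1 : f0 v = 1) :
    chartMap f0 (Projectivization.mk ℝ v hv) = v := by
  obtain ⟨a, ha⟩ := Projectivization.exists_smul_eq_mk_rep ℝ v hv
  rw [chartMap, ← ha, Units.smul_def, _root_.map_smul, smul_eq_mul, h1, mul_one,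
    inv_smul_smul₀ a.ne_zero]

lemma mk_smul_eq {c : ℝ} (hc : c ≠ 0) {v : Fin d → ℝ} (hv : v ≠ 0) (hcv : c • v ≠ 0) :
    Projectivization.mk ℝ (c • v) hcv = Projectivization.mk ℝ v hv := by
  rw [Projectivization.mk_eq_mk_iff]
  exact ⟨Units.mk0 c hc, by simp [Units.smul_def]⟩

lemma combo_pos {a b X Y : ℝ} (ha : 0 ≤ a) (hb : 0 ≤ b) (hab : a + b = 1)
    (hX : 0 < X) (hY : 0 < Y) : 0 < a * X + b * Y := by
  rcases ha.eq_or_lt with h | h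
  · have hb1 : b = 1 := by linarith
    rw [← h, hb1]
    simpa using hY
  · have h1 : 0 < a * X := mul_pos h hX
    have h2 : 0 ≤ b * Y := mul_nonneg hb hY.le
    linarith

lemma div_nonneg_of_mul_nonneg {x y : ℝ} (h : 0 ≤ x * y) (hy : y ≠ 0) : 0 ≤ x / y := by
  rcases hy.lt_or_gt with h' | h'
  · rw [div_nonneg_iff]
    exact Or.inr ⟨by nlinarith, h'.le⟩
  · rw [div_nonneg_iff]
    exact Or.inl ⟨by nlinarith, h'.le⟩

lemma convex_no_mixed {K : Set (Fin d → ℝ)} (hK : Convex ℝ K) (f : (Fin d → ℝ) →ₗ[ℝ] ℝ)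
    (hf : ∀ v ∈ K, f v ≠ 0) {a b : Fin d → ℝ} (ha : a ∈ K) (hb : b ∈ K)
    (h1 : f a < 0) (h2 : 0 < f b) : False := by
  have hD : 0 < f b - f a := by linarith
  have hmem : (f b / (f b - f a)) • a + (-(f a) / (f b - f a)) • b ∈ K :=
    hK ha hb (div_nonneg h2.le hD.le) (div_nonneg (by linarith) hD.le)
      (by field_simp; ring)
  apply hf _ hmem
  simp only [map_add, _root_.map_smul, smul_eq_mul]
  field_simp
  ring

lemma convex_same_sign {K : Set (Fin d → ℝ)} (hK : Convex ℝ K) (f : (Fin d → ℝ) →ₗ[ℝ] ℝ)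
    (hf : ∀ v ∈ K, f v ≠ 0) {a b : Fin d → ℝ} (ha : a ∈ K) (hb : b ∈ K) :
    0 < f a * f b := by
  rcases (hf a ha).lt_or_gt with h1 | h1 <;> rcases (hf b hb).lt_or_gt with h2 | h2
  · exact mul_pos_of_neg_of_neg h1 h2
  · exact absurd (convex_no_mixed hK f hf ha hb h1 h2) (fun h => h)
  · exact absurd (convex_no_mixed hK f hf hb ha h2 h1) (fun h => h)
  · exact mul_pos h1 h2

lemma adm_chart_ne {Ω : Set (PSp d)} {f0 f : (Fin d → ℝ) →ₗ[ℝ] ℝ}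
    (hch : ∀ z ∈ Ω, f0 z.rep ≠ 0) (hf : ∀ z ∈ Ω, f z.rep ≠ 0) :
    ∀ v ∈ chartMap f0 '' Ω, f v ≠ 0 := by
  rintro v ⟨z, hz, rfl⟩
  have h1 := hf z hz
  rw [eval_rep_eq (hch z hz) f] at h1
  exact right_ne_zero_of_mul h1

lemma adm_pos_or_neg {Ω : Set (PSp d)} {f0 f : (Fin d → ℝ) →ₗ[ℝ] ℝ}
    (hch : ∀ z ∈ Ω, f0 z.rep ≠ 0) (hKconv : Convex ℝ (chartMap f0 '' Ω))
    (hf : ∀ z ∈ Ω, f z.rep ≠ 0) : PosOn Ω f0 f ∨ PosOn Ω f0 (-f) := by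
  have hne := adm_chart_ne hch hf
  rcases Set.eq_empty_or_nonempty Ω with rfl | ⟨z0, hz0⟩
  · exact Or.inl (fun z hz => absurd hz (Set.notMem_empty z))
  rcases (hne _ (Set.mem_image_of_mem _ hz0)).lt_or_gt with h0 | h0
  · right
    intro z hz
    have h1 := convex_same_sign hKconv f hne (Set.mem_image_of_mem _ hz0)
      (Set.mem_image_of_mem _ hz)
    simp only [LinearMap.neg_apply]
    nlinarith
  · left
    intro z hz
    have h1 := convex_same_sign hKconv f hne (Set.mem_image_of_mem _ hz0)
      (Set.mem_image_of_mem _ hz)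
    nlinarith

lemma posOn_adm {Ω : Set (PSp d)} {f0 f : (Fin d → ℝ) →ₗ[ℝ] ℝ}
    (hch : ∀ z ∈ Ω, f0 z.rep ≠ 0) (hf : PosOn Ω f0 f) : ∀ z ∈ Ω, f z.rep ≠ 0 := by
  intro z hz
  rw [eval_rep_eq (hch z hz) f]
  exact mul_ne_zero (hch z hz) (hf z hz).ne'

lemma posOn_f0 {Ω : Set (PSp d)} {f0 : (Fin d → ℝ) →ₗ[ℝ] ℝ}
    (hch : ∀ z ∈ Ω, f0 z.rep ≠ 0) : PosOn Ω f0 f0 := by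
  intro z hz
  rw [chart_f0_eq_one (hch z hz)]
  norm_num

lemma ratio_chart {Ω : Set (PSp d)} {f0 : (Fin d → ℝ) →ₗ[ℝ] ℝ}
    (hch : ∀ z ∈ Ω, f0 z.rep ≠ 0) {x y : PSp d} (hx : x ∈ Ω) (hy : y ∈ Ω)
    (f g : (Fin d → ℝ) →ₗ[ℝ] ℝ) :
    f x.rep * g y.rep / (f y.rep * g x.rep)
      = f (chartMap f0 x) * g (chartMap f0 y) / (f (chartMap f0 y) * g (chartMap f0 x)) := by
  rw [eval_rep_eq (hch x hx) f, eval_rep_eq (hch y hy) f, eval_rep_eq (hch x hx) g,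
    eval_rep_eq (hch y hy) g]
  have h1 : f0 x.rep * f (chartMap f0 x) * (f0 y.rep * g (chartMap f0 y))
      = (f0 x.rep * f0 y.rep) * (f (chartMap f0 x) * g (chartMap f0 y)) := by ring
  have h2 : f0 y.rep * f (chartMap f0 y) * (f0 x.rep * g (chartMap f0 x))
      = (f0 x.rep * f0 y.rep) * (f (chartMap f0 y) * g (chartMap f0 x)) := by ring
  rw [h1, h2, mul_div_mul_left _ _ (mul_ne_zero (hch x hx) (hch y hy))]

lemma cross_mem {Ω : Set (PSp d)} {f0 : (Fin d → ℝ) →ₗ[ℝ] ℝ}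
    (hch : ∀ z ∈ Ω, f0 z.rep ≠ 0) {x y : PSp d} (hx : x ∈ Ω) (hy : y ∈ Ω)
    {f g : (Fin d → ℝ) →ₗ[ℝ] ℝ} (hf : PosOn Ω f0 f) (hg : PosOn Ω f0 g) :
    f (chartMap f0 x) * g (chartMap f0 y) / (f (chartMap f0 y) * g (chartMap f0 x))
      ∈ crossSet Ω x y :=
  ⟨f, g, posOn_adm hch hf, posOn_adm hch hg, (ratio_chart hch hx hy f g).symm⟩

lemma cross_repr {Ω : Set (PSp d)} {f0 : (Fin d → ℝ) →ₗ[ℝ] ℝ}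
    (hch : ∀ z ∈ Ω, f0 z.rep ≠ 0) (hKconv : Convex ℝ (chartMap f0 '' Ω))
    {x y : PSp d} (hx : x ∈ Ω) (hy : y ∈ Ω) {ρ : ℝ} (hρ : ρ ∈ crossSet Ω x y) :
    ∃ f g : (Fin d → ℝ) →ₗ[ℝ] ℝ, PosOn Ω f0 f ∧ PosOn Ω f0 g ∧
      ρ = f (chartMap f0 x) * g (chartMap f0 y) / (f (chartMap f0 y) * g (chartMap f0 x)) := by
  obtain ⟨f, g, hfa, hga, rfl⟩ := hρ
  rw [ratio_chart hch hx hy f g]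
  rcases adm_pos_or_neg hch hKconv hfa with hf | hf <;>
    rcases adm_pos_or_neg hch hKconv hga with hg | hg
  · exact ⟨f, g, hf, hg, rfl⟩
  · exact ⟨f, -g, hf, hg, by
      simp only [LinearMap.neg_apply, mul_neg, neg_mul, neg_div_neg_eq]⟩
  · exact ⟨-f, g, hf, hg, by
      simp only [LinearMap.neg_apply, mul_neg, neg_mul, neg_div_neg_eq]⟩
  · exact ⟨-f, -g, hf, hg, by
      simp only [LinearMap.neg_apply, mul_neg, neg_mul, neg_neg, neg_div_neg_eq]⟩

lemma one_mem_cross {Ω : Set (PSp d)} {f0 : (Fin d → ℝ) →ₗ[ℝ] ℝ}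
    (hch : ∀ z ∈ Ω, f0 z.rep ≠ 0) {x y : PSp d} (hx : x ∈ Ω) (hy : y ∈ Ω) :
    (1 : ℝ) ∈ crossSet Ω x y := by
  have h := cross_mem hch hx hy (posOn_f0 hch) (posOn_f0 hch)
  rwa [chart_f0_eq_one (hch x hx), chart_f0_eq_one (hch y hy),
    show (1 : ℝ) * 1 / (1 * 1) = 1 by norm_num] at h

lemma ratio_bound {Ω : Set (PSp d)} {f0 : (Fin d → ℝ) →ₗ[ℝ] ℝ}
    (hΩo : IsOpen Ω) (hch : ∀ z ∈ Ω, f0 z.rep ≠ 0)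
    {x y : PSp d} (hx : x ∈ Ω) (hy : y ∈ Ω) :
    ∃ B : ℝ, 0 < B ∧ ∀ f : (Fin d → ℝ) →ₗ[ℝ] ℝ, PosOn Ω f0 f →
      f (chartMap f0 x) ≤ B * f (chartMap f0 y) := by
  classical
  have hy0 : chartMap f0 y ≠ 0 := chart_ne_zero (hch y hy)
  have hcont : Continuous (Projectivization.mk' ℝ (V := Fin d → ℝ)) :=
    continuous_quotient_mk'
  have hU : IsOpen (Projectivization.mk' ℝ ⁻¹' Ω) := hΩo.preimage hcont
  obtain ⟨W, hWo, hWeq⟩ := isOpen_induced_iff.mp hU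
  have hyΩ' : (⟨chartMap f0 y, hy0⟩ : {v : Fin d → ℝ // v ≠ 0})
      ∈ Projectivization.mk' ℝ ⁻¹' Ω := by
    show Projectivization.mk' ℝ _ ∈ Ω
    rw [Projectivization.mk'_eq_mk, mk_chart_eq (hch y hy)]
    exact hy
  have hyW : chartMap f0 y ∈ W := by
    have h1 : (⟨chartMap f0 y, hy0⟩ : {v : Fin d → ℝ // v ≠ 0}) ∈ Subtype.val ⁻¹' W := by
      rw [hWeq]; exact hyΩ'
    exact h1
  set c : ℝ → (Fin d → ℝ) := fun s => chartMap f0 y + s • (chartMap f0 y - chartMap f0 x)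
    with hc
  have hccont : Continuous c := by
    apply continuous_const.add
    exact (continuous_id.smul continuous_const)
  have h0W : c 0 ∈ W ∩ {(0 : Fin d → ℝ)}ᶜ := by
    constructor
    · simp only [hc, zero_smul, add_zero]; exact hyW
    · simp only [hc, zero_smul, add_zero, Set.mem_compl_iff, Set.mem_singleton_iff]
      exact hy0
  have hnhds : c ⁻¹' (W ∩ {(0 : Fin d → ℝ)}ᶜ) ∈ nhds (0 : ℝ) :=
    hccont.continuousAt.preimage_mem_nhds
      (((hWo.inter isOpen_compl_singleton).mem_nhds h0W))
  obtain ⟨ε, hε, hball⟩ := Metric.mem_nhds_iff.mp hnhds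
  have hsball : (ε / 2 : ℝ) ∈ Metric.ball (0 : ℝ) ε := by
    rw [Metric.mem_ball, dist_zero_right, Real.norm_eq_abs, abs_of_pos (by linarith)]
    linarith
  have hsmem := hball hsball
  set s : ℝ := ε / 2 with hs
  have hspos : 0 < s := by positivity
  have hcs0 : c s ≠ 0 := hsmem.2
  have hqΩ : Projectivization.mk ℝ (c s) hcs0 ∈ Ω := by
    have h1 : (⟨c s, hcs0⟩ : {v : Fin d → ℝ // v ≠ 0}) ∈ Subtype.val ⁻¹' W := hsmem.1
    rw [hWeq] at h1
    have h2 : Projectivization.mk' ℝ (⟨c s, hcs0⟩ : {v : Fin d → ℝ // v ≠ 0}) ∈ Ω := h1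
    rwa [Projectivization.mk'_eq_mk] at h2
  have hf0cs : f0 (c s) = 1 := by
    simp only [hc, map_add, _root_.map_smul, map_sub, smul_eq_mul,
      chart_f0_eq_one (hch x hx), chart_f0_eq_one (hch y hy)]
    ring
  have hhat : chartMap f0 (Projectivization.mk ℝ (c s) hcs0) = c s :=
    chart_mk_eq hcs0 hf0cs
  refine ⟨(1 + s) / s, by positivity, ?_⟩
  intro f hf
  have h1 : 0 < f (c s) := by
    have h2 := hf _ hqΩ
    rwa [hhat] at h2
  have h2 : 0 < f (chartMap f0 y) := hf y hy
  have h3 : f (c s) = (1 + s) * f (chartMap f0 y) - s * f (chartMap f0 x) := by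
    simp only [hc, map_add, _root_.map_smul, map_sub, smul_eq_mul]
    ring
  rw [div_mul_eq_mul_div, le_div_iff₀ hspos]
  nlinarith

lemma cross_bddAbove {Ω : Set (PSp d)} {f0 : (Fin d → ℝ) →ₗ[ℝ] ℝ}
    (hΩo : IsOpen Ω) (hch : ∀ z ∈ Ω, f0 z.rep ≠ 0)
    (hKconv : Convex ℝ (chartMap f0 '' Ω))
    {x y : PSp d} (hx : x ∈ Ω) (hy : y ∈ Ω) : BddAbove (crossSet Ω x y) := by
  obtain ⟨B1, hB1, h1⟩ := ratio_bound hΩo hch hx hy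
  obtain ⟨B2, hB2, h2⟩ := ratio_bound hΩo hch hy hx
  refine ⟨B1 * B2, ?_⟩
  rintro ρ hρ
  obtain ⟨f, g, hf, hg, rfl⟩ := cross_repr hch hKconv hx hy hρ
  have hfx := hf x hx
  have hfy := hf y hy
  have hgx := hg x hx
  have hgy := hg y hy
  rw [div_le_iff₀ (mul_pos hfy hgx)]
  have ha := h1 f hf
  have hb := h2 g hg
  nlinarith [mul_le_mul ha hb hgy.le (by positivity)]

lemma hilbertDist_nonneg' {Ω : Set (PSp d)} {f0 : (Fin d → ℝ) →ₗ[ℝ] ℝ}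
    (hΩo : IsOpen Ω) (hch : ∀ z ∈ Ω, f0 z.rep ≠ 0)
    (hKconv : Convex ℝ (chartMap f0 '' Ω))
    {x y : PSp d} (hx : x ∈ Ω) (hy : y ∈ Ω) : 0 ≤ hilbertDist Ω x y := by
  have h1 : (1 : ℝ) ≤ sSup (crossSet Ω x y) :=
    le_csSup (cross_bddAbove hΩo hch hKconv hx hy) (one_mem_cross hch hx hy)
  unfold hilbertDist
  nlinarith [Real.log_nonneg h1]

lemma seg_mem_D {Ω : Set (PSp d)} {f0 : (Fin d → ℝ) →ₗ[ℝ] ℝ}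
    (hch : ∀ z ∈ Ω, f0 z.rep ≠ 0) {𝒟 : Set (PSp d)}
    (h𝒟Ω : 𝒟 ⊆ Ω) (h𝒟conv : IsConvexSet 𝒟) {y1 y2 : PSp d}
    (hy1 : y1 ∈ 𝒟) (hy2 : y2 ∈ 𝒟) {a b : ℝ} (ha : 0 ≤ a) (hb : 0 ≤ b) (hab : a + b = 1)
    (hp : a • chartMap f0 y1 + b • chartMap f0 y2 ≠ 0) :
    Projectivization.mk ℝ (a • chartMap f0 y1 + b • chartMap f0 y2) hp ∈ 𝒟 := by
  obtain ⟨f1, hf1ne, hf1conv⟩ := h𝒟conv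
  have hKne : ∀ v ∈ chartMap f1 '' 𝒟, f0 v ≠ 0 := by
    rintro v ⟨y, hy, rfl⟩
    have h1 := hch y (h𝒟Ω hy)
    rw [eval_rep_eq (hf1ne y hy) f0] at h1
    exact right_ne_zero_of_mul h1
  have hrel : ∀ y, (hy : y ∈ 𝒟) → f1 (chartMap f0 y) * f0 (chartMap f1 y) = 1 := by
    intro y hy
    have h1 := eval_rep_eq (hch y (h𝒟Ω hy)) f1
    have h2 := eval_rep_eq (hf1ne y hy) f0
    have hne := hf1ne y hy
    rw [h2] at h1
    have h3 : f1 y.rep * (f1 (chartMap f0 y) * f0 (chartMap f1 y)) = f1 y.rep * 1 := by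
      rw [mul_one]
      linear_combination -h1
    exact mul_left_cancel₀ hne h3
  have hsgn : ∀ y, (hy : y ∈ 𝒟) → ∀ y', (hy' : y' ∈ 𝒟) →
      0 < f1 (chartMap f0 y) * f1 (chartMap f0 y') := by
    intro y hy y' hy'
    have h := convex_same_sign hf1conv f0 hKne
      (Set.mem_image_of_mem _ hy) (Set.mem_image_of_mem _ hy')
    have e3 : (f1 (chartMap f0 y) * f1 (chartMap f0 y'))
        * (f0 (chartMap f1 y) * f0 (chartMap f1 y')) = 1 := by
      linear_combination (f1 (chartMap f0 y') * f0 (chartMap f1 y')) * hrel y hy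
        + hrel y' hy'
    nlinarith
  set u1 := f1 (chartMap f0 y1) with hu1
  set u2 := f1 (chartMap f0 y2) with hu2
  have h11 : 0 < u1 * u1 := hsgn y1 hy1 y1 hy1
  have h12 : 0 < u1 * u2 := hsgn y1 hy1 y2 hy2
  have h21 : 0 < u2 * u1 := hsgn y2 hy2 y1 hy1
  have h22 : 0 < u2 * u2 := hsgn y2 hy2 y2 hy2
  set p := a • chartMap f0 y1 + b • chartMap f0 y2 with hpdef
  have e : f1 p = a * u1 + b * u2 := by
    simp only [hpdef, map_add, _root_.map_smul, smul_eq_mul, hu1, hu2]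
  have hpu1 : 0 < f1 p * u1 := by
    have e2 : f1 p * u1 = a * (u1 * u1) + b * (u1 * u2) := by rw [e]; ring
    rw [e2]
    exact combo_pos ha hb hab h11 h12
  have hpu2 : 0 < f1 p * u2 := by
    have e2 : f1 p * u2 = a * (u1 * u2) + b * (u2 * u2) := by rw [e]; ring
    rw [e2]
    exact combo_pos ha hb hab h12 h22
  have hf1p : f1 p ≠ 0 := by
    intro h0
    rw [h0, zero_mul] at hpu1
    exact lt_irrefl 0 hpu1
  -- the corresponding convex combination in the `f1` chart
  have ha' : 0 ≤ a * u1 / f1 p := by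
    apply div_nonneg_of_mul_nonneg _ hf1p
    nlinarith [mul_nonneg ha hpu1.le]
  have hb' : 0 ≤ b * u2 / f1 p := by
    apply div_nonneg_of_mul_nonneg _ hf1p
    nlinarith [mul_nonneg hb hpu2.le]
  have hab' : a * u1 / f1 p + b * u2 / f1 p = 1 := by
    rw [← add_div, ← e]
    exact div_self hf1p
  have hqmem : (a * u1 / f1 p) • chartMap f1 y1 + (b * u2 / f1 p) • chartMap f1 y2
      ∈ chartMap f1 '' 𝒟 :=
    hf1conv (Set.mem_image_of_mem _ hy1) (Set.mem_image_of_mem _ hy2) ha' hb' hab'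
  obtain ⟨y', hy', hqeq⟩ := hqmem
  -- relation between the two charts
  have hch1 : chartMap f0 y1 = u1 • chartMap f1 y1 := by
    simp only [hu1, chartMap, _root_.map_smul, smul_eq_mul, smul_smul]
    congr 1
    field_simp [hf1ne y1 hy1, hch y1 (h𝒟Ω hy1)]
    try ring
  have hch2 : chartMap f0 y2 = u2 • chartMap f1 y2 := by
    simp only [hu2, chartMap, _root_.map_smul, smul_eq_mul, smul_smul]
    congr 1
    field_simp [hf1ne y2 hy2, hch y2 (h𝒟Ω hy2)]
    try ring
  set q := (a * u1 / f1 p) • chartMap f1 y1 + (b * u2 / f1 p) • chartMap f1 y2 with hqdef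
  have hs1 : f1 p * (a * u1 / f1 p) = a * u1 := by field_simp
  have hs2 : f1 p * (b * u2 / f1 p) = b * u2 := by field_simp
  have hpq : (f1 p) • q = p := by
    rw [hqdef, smul_add, smul_smul, smul_smul, hs1, hs2, hpdef, hch1, hch2,
      smul_smul, smul_smul]
  have hq0 : q ≠ 0 := by
    intro h0
    rw [h0, smul_zero] at hpq
    exact hp hpq.symm
  have hmk : Projectivization.mk ℝ p hp = Projectivization.mk ℝ q hq0 := by
    rw [Projectivization.mk_eq_mk_iff]
    exact ⟨Units.mk0 (f1 p) hf1p, by simpa [Units.smul_def] using hpq⟩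
  rw [hmk]
  have hy'q : chartMap f1 y' = q := hqeq
  have hmk2 : Projectivization.mk ℝ q hq0 = y' := by
    rw [← mk_chart_eq (hf1ne y' hy')]
    rw [Projectivization.mk_eq_mk_iff]
    exact ⟨1, by simp [hy'q]⟩
  rw [hmk2]
  exact hy'

set_option maxHeartbeats 1000000 in
lemma key_segment {Ω : Set (PSp d)} {f0 : (Fin d → ℝ) →ₗ[ℝ] ℝ}
    (hΩo : IsOpen Ω) (hch : ∀ z ∈ Ω, f0 z.rep ≠ 0)
    (hKconv : Convex ℝ (chartMap f0 '' Ω)) {𝒟 : Set (PSp d)} (h𝒟Ω : 𝒟 ⊆ Ω)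
    (h𝒟conv : IsConvexSet 𝒟) {x z y1 y2 : PSp d}
    (hx : x ∈ Ω) (hz : z ∈ Ω) (hy1 : y1 ∈ 𝒟) (hy2 : y2 ∈ 𝒟)
    {t : ℝ} (ht0 : 0 ≤ t) (ht1 : t ≤ 1)
    (hwv : (1 - t) • chartMap f0 x + t • chartMap f0 z ≠ 0)
    (hwΩ : Projectivization.mk ℝ ((1 - t) • chartMap f0 x + t • chartMap f0 z) hwv ∈ Ω) :
    ∃ y ∈ 𝒟, hilbertDist Ω (Projectivization.mk ℝ ((1 - t) • chartMap f0 x + t • chartMap f0 z) hwv) y ≤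
      max (hilbertDist Ω x y1) (hilbertDist Ω z y2) := by
  have hy1Ω : y1 ∈ Ω := h𝒟Ω hy1
  have hy2Ω : y2 ∈ Ω := h𝒟Ω hy2
  set R1 := sSup (crossSet Ω x y1) with hR1def
  set R2 := sSup (crossSet Ω z y2) with hR2def
  have hbdd1 := cross_bddAbove hΩo hch hKconv hx hy1Ω
  have hbdd2 := cross_bddAbove hΩo hch hKconv hz hy2Ω
  have hR1ge : (1 : ℝ) ≤ R1 := le_csSup hbdd1 (one_mem_cross hch hx hy1Ω)
  have hR2ge : (1 : ℝ) ≤ R2 := le_csSup hbdd2 (one_mem_cross hch hz hy2Ω)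
  have pair1 : ∀ f g : (Fin d → ℝ) →ₗ[ℝ] ℝ, PosOn Ω f0 f → PosOn Ω f0 g →
      f (chartMap f0 x) * g (chartMap f0 y1)
        / (f (chartMap f0 y1) * g (chartMap f0 x)) ≤ R1 :=
    fun f g hf hg => le_csSup hbdd1 (cross_mem hch hx hy1Ω hf hg)
  have pair2 : ∀ f g : (Fin d → ℝ) →ₗ[ℝ] ℝ, PosOn Ω f0 f → PosOn Ω f0 g →
      f (chartMap f0 z) * g (chartMap f0 y2)
        / (f (chartMap f0 y2) * g (chartMap f0 z)) ≤ R2 :=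
    fun f g hf hg => le_csSup hbdd2 (cross_mem hch hz hy2Ω hf hg)
  -- the normalizing constants
  set S1 : Set ℝ := {ρ | ∃ g : (Fin d → ℝ) →ₗ[ℝ] ℝ, PosOn Ω f0 g ∧
    ρ = g (chartMap f0 x) / g (chartMap f0 y1)} with hS1def
  set S2 : Set ℝ := {ρ | ∃ g : (Fin d → ℝ) →ₗ[ℝ] ℝ, PosOn Ω f0 g ∧
    ρ = g (chartMap f0 z) / g (chartMap f0 y2)} with hS2def
  set m1 := sInf S1 with hm1def
  set m2 := sInf S2 with hm2def
  have hS1ne : S1.Nonempty := ⟨1, f0, posOn_f0 hch, by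
    rw [chart_f0_eq_one (hch x hx), chart_f0_eq_one (hch y1 hy1Ω)]; norm_num⟩
  have hS2ne : S2.Nonempty := ⟨1, f0, posOn_f0 hch, by
    rw [chart_f0_eq_one (hch z hz), chart_f0_eq_one (hch y2 hy2Ω)]; norm_num⟩
  have hS1bdd : BddBelow S1 := ⟨0, by
    rintro ρ ⟨g, hg, rfl⟩
    exact div_nonneg (hg x hx).le (hg y1 hy1Ω).le⟩
  have hS2bdd : BddBelow S2 := ⟨0, by
    rintro ρ ⟨g, hg, rfl⟩
    exact div_nonneg (hg z hz).le (hg y2 hy2Ω).le⟩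
  have hR1pos : (0 : ℝ) < R1 := by linarith
  have hR2pos : (0 : ℝ) < R2 := by linarith
  -- lower bound for m1, m2 in terms of any positive functional
  have hmlbd1 : ∀ f : (Fin d → ℝ) →ₗ[ℝ] ℝ, PosOn Ω f0 f →
      f (chartMap f0 x) / (R1 * f (chartMap f0 y1)) ≤ m1 := by
    intro f hf
    apply le_csInf hS1ne
    rintro ρ ⟨g, hg, rfl⟩
    have h1 := pair1 f g hf hg
    have hfy := hf y1 hy1Ω
    have hgx := hg x hx
    have hgy := hg y1 hy1Ω
    have hfx := hf x hx
    rw [div_le_iff₀ (mul_pos hfy hgx)] at h1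
    rw [div_le_div_iff₀ (mul_pos hR1pos hfy) hgy]
    linarith only [h1]
  have hmlbd2 : ∀ f : (Fin d → ℝ) →ₗ[ℝ] ℝ, PosOn Ω f0 f →
      f (chartMap f0 z) / (R2 * f (chartMap f0 y2)) ≤ m2 := by
    intro f hf
    apply le_csInf hS2ne
    rintro ρ ⟨g, hg, rfl⟩
    have h1 := pair2 f g hf hg
    have hfy := hf y2 hy2Ω
    have hgx := hg z hz
    have hgy := hg y2 hy2Ω
    have hfx := hf z hz
    rw [div_le_iff₀ (mul_pos hfy hgx)] at h1
    rw [div_le_div_iff₀ (mul_pos hR2pos hfy) hgy]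
    linarith only [h1]
  have hm1pos : 0 < m1 := by
    have h1 := hmlbd1 f0 (posOn_f0 hch)
    rw [chart_f0_eq_one (hch x hx), chart_f0_eq_one (hch y1 hy1Ω)] at h1
    have h2 : (0 : ℝ) < 1 / (R1 * 1) := div_pos one_pos (by rw [mul_one]; exact hR1pos)
    linarith
  have hm2pos : 0 < m2 := by
    have h1 := hmlbd2 f0 (posOn_f0 hch)
    rw [chart_f0_eq_one (hch z hz), chart_f0_eq_one (hch y2 hy2Ω)] at h1
    have h2 : (0 : ℝ) < 1 / (R2 * 1) := div_pos one_pos (by rw [mul_one]; exact hR2pos)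
    linarith
  -- upper and lower estimates
  have hub1 : ∀ f : (Fin d → ℝ) →ₗ[ℝ] ℝ, PosOn Ω f0 f →
      f (chartMap f0 x) ≤ R1 * m1 * f (chartMap f0 y1) := by
    intro f hf
    have h1 := hmlbd1 f hf
    have hfy := hf y1 hy1Ω
    rw [div_le_iff₀ (mul_pos hR1pos hfy)] at h1
    linarith only [h1]
  have hub2 : ∀ f : (Fin d → ℝ) →ₗ[ℝ] ℝ, PosOn Ω f0 f →
      f (chartMap f0 z) ≤ R2 * m2 * f (chartMap f0 y2) := by
    intro f hf
    have h1 := hmlbd2 f hf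
    have hfy := hf y2 hy2Ω
    rw [div_le_iff₀ (mul_pos hR2pos hfy)] at h1
    linarith only [h1]
  have hlb1 : ∀ g : (Fin d → ℝ) →ₗ[ℝ] ℝ, PosOn Ω f0 g →
      m1 * g (chartMap f0 y1) ≤ g (chartMap f0 x) := by
    intro g hg
    have h1 : m1 ≤ g (chartMap f0 x) / g (chartMap f0 y1) := csInf_le hS1bdd ⟨g, hg, rfl⟩
    have hgy := hg y1 hy1Ω
    rw [le_div_iff₀ hgy] at h1
    linarith
  have hlb2 : ∀ g : (Fin d → ℝ) →ₗ[ℝ] ℝ, PosOn Ω f0 g →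
      m2 * g (chartMap f0 y2) ≤ g (chartMap f0 z) := by
    intro g hg
    have h1 : m2 ≤ g (chartMap f0 z) / g (chartMap f0 y2) := csInf_le hS2bdd ⟨g, hg, rfl⟩
    have hgy := hg y2 hy2Ω
    rw [le_div_iff₀ hgy] at h1
    linarith
  -- the point y on the segment [y1, y2]
  set σ := (1 - t) * m1 + t * m2 with hσdef
  have hσ : 0 < σ := combo_pos (by linarith) ht0 (by ring) hm1pos hm2pos
  set a := (1 - t) * m1 / σ with hadef
  set b := t * m2 / σ with hbdef
  have ha : 0 ≤ a := div_nonneg (mul_nonneg (by linarith) hm1pos.le) hσ.le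
  have hb : 0 ≤ b := div_nonneg (mul_nonneg ht0 hm2pos.le) hσ.le
  have hab : a + b = 1 := by
    rw [hadef, hbdef, ← add_div, hσdef]
    exact div_self hσ.ne'
  set p := a • chartMap f0 y1 + b • chartMap f0 y2 with hpdef
  have hf0p : f0 p = 1 := by
    rw [hpdef, map_add, _root_.map_smul, _root_.map_smul, smul_eq_mul, smul_eq_mul,
      chart_f0_eq_one (hch y1 hy1Ω), chart_f0_eq_one (hch y2 hy2Ω), mul_one, mul_one, hab]
  have hp : p ≠ 0 := by
    intro h0
    rw [h0, map_zero] at hf0p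
    norm_num at hf0p
  have hy𝒟 : Projectivization.mk ℝ p hp ∈ 𝒟 := seg_mem_D hch h𝒟Ω h𝒟conv hy1 hy2 ha hb hab hp
  have hyΩ : Projectivization.mk ℝ p hp ∈ Ω := h𝒟Ω hy𝒟
  have hyh : chartMap f0 (Projectivization.mk ℝ p hp) = p := chart_mk_eq hp hf0p
  have hf0wv : f0 ((1 - t) • chartMap f0 x + t • chartMap f0 z) = 1 := by
    rw [map_add, _root_.map_smul, _root_.map_smul, smul_eq_mul, smul_eq_mul,
      chart_f0_eq_one (hch x hx), chart_f0_eq_one (hch z hz)]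
    ring
  have hwh : chartMap f0 (Projectivization.mk ℝ _ hwv) =
      (1 - t) • chartMap f0 x + t • chartMap f0 z := chart_mk_eq hwv hf0wv
  set R := max R1 R2 with hRdef
  have hRge : (1 : ℝ) ≤ R := le_trans hR1ge (le_max_left _ _)
  -- every cross-ratio of (w, y) is at most R
  have claimA : ∀ ρ ∈ crossSet Ω (Projectivization.mk ℝ _ hwv) (Projectivization.mk ℝ p hp),
      ρ ≤ R := by
    intro ρ hρ
    obtain ⟨f, g, hf, hg, rfl⟩ := cross_repr hch hKconv hwΩ hyΩ hρ
    rw [hwh, hyh]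
    have hfp : 0 < f p := by have h1 := hf _ hyΩ; rwa [hyh] at h1
    have hgp : 0 < g p := by have h1 := hg _ hyΩ; rwa [hyh] at h1
    have hfw : 0 < f ((1 - t) • chartMap f0 x + t • chartMap f0 z) := by
      have h1 := hf _ hwΩ; rwa [hwh] at h1
    have hgw : 0 < g ((1 - t) • chartMap f0 x + t • chartMap f0 z) := by
      have h1 := hg _ hwΩ; rwa [hwh] at h1
    have hfy1 := hf y1 hy1Ω
    have hfy2 := hf y2 hy2Ω
    have hgy1 := hg y1 hy1Ω
    have hgy2 := hg y2 hy2Ω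
    have e1 : f ((1 - t) • chartMap f0 x + t • chartMap f0 z)
        = (1 - t) * f (chartMap f0 x) + t * f (chartMap f0 z) := by
      rw [map_add, _root_.map_smul, _root_.map_smul, smul_eq_mul, smul_eq_mul]
    have eg1 : g ((1 - t) • chartMap f0 x + t • chartMap f0 z)
        = (1 - t) * g (chartMap f0 x) + t * g (chartMap f0 z) := by
      rw [map_add, _root_.map_smul, _root_.map_smul, smul_eq_mul, smul_eq_mul]
    have efp : f p = a * f (chartMap f0 y1) + b * f (chartMap f0 y2) := by
      rw [hpdef, map_add, _root_.map_smul, _root_.map_smul, smul_eq_mul, smul_eq_mul]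
    have egp : g p = a * g (chartMap f0 y1) + b * g (chartMap f0 y2) := by
      rw [hpdef, map_add, _root_.map_smul, _root_.map_smul, smul_eq_mul, smul_eq_mul]
    have ep : σ * f p = (1 - t) * m1 * f (chartMap f0 y1) + t * m2 * f (chartMap f0 y2) := by
      rw [efp, hadef, hbdef]
      field_simp
    have epg : σ * g p = (1 - t) * m1 * g (chartMap f0 y1) + t * m2 * g (chartMap f0 y2) := by
      rw [egp, hadef, hbdef]
      field_simp
    have hx' : f (chartMap f0 x) ≤ R * (m1 * f (chartMap f0 y1)) := by
      have h1 := hub1 f hf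
      have h2 : R1 * (m1 * f (chartMap f0 y1)) ≤ R * (m1 * f (chartMap f0 y1)) :=
        mul_le_mul_of_nonneg_right (le_max_left _ _) (mul_nonneg hm1pos.le hfy1.le)
      linarith only [h1, h2]
    have hz' : f (chartMap f0 z) ≤ R * (m2 * f (chartMap f0 y2)) := by
      have h1 := hub2 f hf
      have h2 : R2 * (m2 * f (chartMap f0 y2)) ≤ R * (m2 * f (chartMap f0 y2)) :=
        mul_le_mul_of_nonneg_right (le_max_right _ _) (mul_nonneg hm2pos.le hfy2.le)
      linarith only [h1, h2]
    have ineqf : f ((1 - t) • chartMap f0 x + t • chartMap f0 z) ≤ R * (σ * f p) := by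
      have h1 := mul_le_mul_of_nonneg_left hx' (by linarith : (0 : ℝ) ≤ 1 - t)
      have h2 := mul_le_mul_of_nonneg_left hz' ht0
      have ep2 : R * (σ * f p) = R * ((1 - t) * m1 * f (chartMap f0 y1))
          + R * (t * m2 * f (chartMap f0 y2)) := by rw [ep]; ring
      linarith only [e1, h1, h2, ep2]
    have ineqg : σ * g p ≤ g ((1 - t) • chartMap f0 x + t • chartMap f0 z) := by
      have h1 := mul_le_mul_of_nonneg_left (hlb1 g hg) (by linarith : (0 : ℝ) ≤ 1 - t)
      have h2 := mul_le_mul_of_nonneg_left (hlb2 g hg) ht0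
      linarith only [eg1, epg, h1, h2]
    rw [div_le_iff₀ (mul_pos hfp hgw)]
    have hA := mul_le_mul_of_nonneg_right ineqf hgp.le
    have hB := mul_le_mul_of_nonneg_left ineqg (mul_nonneg (by linarith only [hRge] : (0:ℝ) ≤ R) hfp.le)
    linarith only [hA, hB]
  have hbddw : BddAbove (crossSet Ω (Projectivization.mk ℝ _ hwv) (Projectivization.mk ℝ p hp)) :=
    ⟨R, fun ρ hρ => claimA ρ hρ⟩
  have hsup_le : sSup (crossSet Ω (Projectivization.mk ℝ _ hwv) (Projectivization.mk ℝ p hp)) ≤ R :=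
    Real.sSup_le claimA (by linarith)
  have hsup_ge : (1 : ℝ) ≤
      sSup (crossSet Ω (Projectivization.mk ℝ _ hwv) (Projectivization.mk ℝ p hp)) :=
    le_csSup hbddw (one_mem_cross hch hwΩ hyΩ)
  refine ⟨Projectivization.mk ℝ p hp, hy𝒟, ?_⟩
  have hlog : Real.log (sSup (crossSet Ω (Projectivization.mk ℝ _ hwv)
      (Projectivization.mk ℝ p hp))) ≤ Real.log R :=
    Real.log_le_log (by linarith) hsup_le
  have hH1 : hilbertDist Ω x y1 = 1 / 2 * Real.log R1 := rfl
  have hH2 : hilbertDist Ω z y2 = 1 / 2 * Real.log R2 := rfl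
  have hgoal : hilbertDist Ω (Projectivization.mk ℝ _ hwv) (Projectivization.mk ℝ p hp)
      = 1 / 2 * Real.log (sSup (crossSet Ω (Projectivization.mk ℝ _ hwv)
        (Projectivization.mk ℝ p hp))) := rfl
  rw [hgoal]
  rcases max_cases R1 R2 with ⟨hmax, hle⟩ | ⟨hmax, hle⟩
  · have : Real.log R = Real.log R1 := by rw [hRdef, hmax]
    rw [hH1]
    refine le_trans ?_ (le_max_left _ _)
    rw [← this]
    linarith
  · have : Real.log R = Real.log R2 := by rw [hRdef, hmax]
    rw [hH2]
    refine le_trans ?_ (le_max_right _ _)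
    rw [← this]
    linarith


end Prop43

/-- **Proposition 4.3**: metric neighborhoods (for the Hilbert metric) of a non-empty
closed convex subset of a properly convex domain are convex. -/
theorem neighborhood_of_convex_is_convex {d : ℕ} (Ω 𝒟 : Set (PSp d))
    (hΩ : IsProperlyConvexDomain Ω)
    (h𝒟ne : 𝒟.Nonempty) (h𝒟Ω : 𝒟 ⊆ Ω) (h𝒟conv : IsConvexSet 𝒟)
    (h𝒟cl : closure 𝒟 ∩ Ω ⊆ 𝒟) (r : ℝ) (hr : 0 ≤ r) :
    IsConvexSet {x ∈ Ω | hilbertDistToSet Ω x 𝒟 < r} ∧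
    {x ∈ Ω | hilbertDistToSet Ω x 𝒟 < r} ⊆ Ω := by
  obtain ⟨hΩo, hΩne, f0, hch, hKconv, hKbdd⟩ := hΩ
  constructor
  swap
  · exact fun x hx => hx.1
  refine ⟨f0, fun x hx => hch x hx.1, ?_⟩
  rintro p ⟨x, hxN, rfl⟩ q ⟨z, hzN, rfl⟩ a b ha hb hab
  obtain ⟨hxΩ, hxd⟩ := hxN
  obtain ⟨hzΩ, hzd⟩ := hzN
  obtain rfl : a = 1 - b := by linarith
  have hb1 : b ≤ 1 := by linarith
  have hf0wv : f0 ((1 - b) • chartMap f0 x + b • chartMap f0 z) = 1 := by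
    rw [map_add, _root_.map_smul, _root_.map_smul, smul_eq_mul, smul_eq_mul,
      chart_f0_eq_one (hch x hxΩ), chart_f0_eq_one (hch z hzΩ)]
    ring
  have hwv : (1 - b) • chartMap f0 x + b • chartMap f0 z ≠ 0 := by
    intro h0
    rw [h0, map_zero] at hf0wv
    norm_num at hf0wv
  have hmem : (1 - b) • chartMap f0 x + b • chartMap f0 z ∈ chartMap f0 '' Ω :=
    hKconv (Set.mem_image_of_mem _ hxΩ) (Set.mem_image_of_mem _ hzΩ) ha hb hab
  obtain ⟨w', hw', hweq⟩ := hmem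
  have hwΩ : Projectivization.mk ℝ ((1 - b) • chartMap f0 x + b • chartMap f0 z) hwv ∈ Ω := by
    have hkey : Projectivization.mk ℝ ((1 - b) • chartMap f0 x + b • chartMap f0 z) hwv = w' := by
      rw [← mk_chart_eq (hch w' hw'), Projectivization.mk_eq_mk_iff]
      exact ⟨1, by simp [hweq]⟩
    rw [hkey]
    exact hw'
  -- choose y1, y2 in 𝒟 close to x, z
  have hSne : ∀ u : PSp d, {s | ∃ y ∈ 𝒟, s = hilbertDist Ω u y}.Nonempty := by
    intro u
    obtain ⟨y0, hy0⟩ := h𝒟ne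
    exact ⟨hilbertDist Ω u y0, y0, hy0, rfl⟩
  have hxd' : sInf {s | ∃ y ∈ 𝒟, s = hilbertDist Ω x y} < r := hxd
  have hzd' : sInf {s | ∃ y ∈ 𝒟, s = hilbertDist Ω z y} < r := hzd
  obtain ⟨s1, ⟨y1, hy1, rfl⟩, hs1⟩ := exists_lt_of_csInf_lt (hSne x) hxd'
  obtain ⟨s2, ⟨y2, hy2, rfl⟩, hs2⟩ := exists_lt_of_csInf_lt (hSne z) hzd'
  obtain ⟨y, hy𝒟, hyle⟩ := key_segment hΩo hch hKconv h𝒟Ω h𝒟conv hxΩ hzΩ hy1 hy2 hb hb1 hwv hwΩ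
  refine ⟨Projectivization.mk ℝ ((1 - b) • chartMap f0 x + b • chartMap f0 z) hwv,
    ⟨hwΩ, ?_⟩, chart_mk_eq hwv hf0wv⟩
  have hbddw : BddBelow {s | ∃ y' ∈ 𝒟, s = hilbertDist Ω
      (Projectivization.mk ℝ ((1 - b) • chartMap f0 x + b • chartMap f0 z) hwv) y'} := by
    refine ⟨0, ?_⟩
    rintro s ⟨y', hy', rfl⟩
    exact hilbertDist_nonneg' hΩo hch hKconv hwΩ (h𝒟Ω hy')
  have hle : hilbertDistToSet Ω
      (Projectivization.mk ℝ ((1 - b) • chartMap f0 x + b • chartMap f0 z) hwv) 𝒟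
      ≤ hilbertDist Ω (Projectivization.mk ℝ ((1 - b) • chartMap f0 x + b • chartMap f0 z) hwv) y :=
    csInf_le hbddw ⟨y, hy𝒟, rfl⟩
  have hmax : max (hilbertDist Ω x y1) (hilbertDist Ω z y2) < r := max_lt hs1 hs2
  linarith
end CCProj
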